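/- arXiv:1507.04457 — 2 statements merged into one kernel-verified Lean document; each statement's English description precedes it below -/
import Mathlib

section
/- Let X and Y be independent B × d₂ random matrices with i.i.d. entries uniform on {-γ, γ}. Then P(|∑_{i=1}^{B} ∑_{j,k=1}^{d₂} X_{ij}Y_{ik}| ≥ γ²Bd₂²/8) ≤ 2exp(-cBd₂) for a universal constant c > 0. -/
open MeasureTheory ProbabilityTheory Real
open scoped ENNReal

/-- Two-point ±γ variable: exponential moment bound (Hoeffding's lemma form). -/
lemma twoPoint_lintegral {Ω : Type} [MeasurableSpace Ω] {μ : Measure Ω}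
    [IsProbabilityMeasure μ] {γ : ℝ} (hγ : 0 < γ) {f : Ω → ℝ} (hf : Measurable f)
    (h1 : μ {ω | f ω = γ} = 1/2) (h2 : μ {ω | f ω = -γ} = 1/2) (c : ℝ) :
    ∫⁻ ω, ENNReal.ofReal (exp (c * f ω)) ∂μ ≤ ENNReal.ofReal (exp (c^2 * γ^2 / 2)) := by
  classical
  set A : Set Ω := {ω | f ω = γ} with hA
  set B : Set Ω := {ω | f ω = -γ} with hB
  have hAm : MeasurableSet A := hf (measurableSet_singleton γ)
  have hBm : MeasurableSet B := hf (measurableSet_singleton (-γ))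
  have hdisj : Disjoint A B := by
    rw [Set.disjoint_left]
    intro ω hωA hωB
    have h3 : γ = -γ :=
      (show f ω = γ from hωA).symm.trans (show f ω = -γ from hωB)
    linarith
  have hcompl : μ (A ∪ B)ᶜ = 0 := by
    have hU : μ (A ∪ B) = 1 := by
      rw [measure_union hdisj hBm, h1, h2]
      rw [one_div, ENNReal.inv_two_add_inv_two]
    have := measure_compl (hAm.union hBm) (measure_ne_top μ _)
    rw [hU, measure_univ] at this
    simpa using this
  have key : ∫⁻ ω, ENNReal.ofReal (exp (c * f ω)) ∂μ
      = ENNReal.ofReal (exp (c * γ)) * (1/2) + ENNReal.ofReal (exp (c * (-γ))) * (1/2) := by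
    rw [← lintegral_add_compl (fun ω => ENNReal.ofReal (exp (c * f ω))) (hAm.union hBm)]
    have h0 : ∫⁻ ω in (A ∪ B)ᶜ, ENNReal.ofReal (exp (c * f ω)) ∂μ = 0 := by
      rw [Measure.restrict_eq_zero.mpr hcompl]; simp
    rw [h0, add_zero, lintegral_union hBm hdisj]
    have hAint : ∫⁻ ω in A, ENNReal.ofReal (exp (c * f ω)) ∂μ
        = ENNReal.ofReal (exp (c * γ)) * (1/2) := by
      rw [setLIntegral_congr_fun hAm ((fun ω hω => by
        simp only [hA, Set.mem_setOf_eq] at hω; rw [hω]))]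
      rw [setLIntegral_const, h1]
    have hBint : ∫⁻ ω in B, ENNReal.ofReal (exp (c * f ω)) ∂μ
        = ENNReal.ofReal (exp (c * (-γ))) * (1/2) := by
      rw [setLIntegral_congr_fun hBm ((fun ω hω => by
        simp only [hB, Set.mem_setOf_eq] at hω; rw [hω]))]
      rw [setLIntegral_const, h2]
    rw [hAint, hBint]
  rw [key]
  have hhalf : (1/2 : ℝ≥0∞) = ENNReal.ofReal (1/2) := by
    rw [ENNReal.ofReal_div_of_pos] <;> norm_num
  rw [hhalf, ← ENNReal.ofReal_mul (exp_nonneg _), ← ENNReal.ofReal_mul (exp_nonneg _),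
    ← ENNReal.ofReal_add (by positivity) (by positivity)]
  apply ENNReal.ofReal_le_ofReal
  have hcosh : exp (c * γ) * (1/2) + exp (c * (-γ)) * (1/2) = cosh (c * γ) := by
    rw [Real.cosh_eq]; ring
  rw [hcosh]
  calc cosh (c * γ) ≤ exp ((c*γ)^2 / 2) := Real.cosh_le_exp_half_sq _
    _ = exp (c^2 * γ^2 / 2) := by ring_nf

lemma row_mgf {Ω : Type} [MeasurableSpace Ω] {μ : Measure Ω} [IsProbabilityMeasure μ]
    {B d₂ : ℕ} {γ : ℝ} (hγ : 0 < γ)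
    {Z : Fin 2 → Fin B → Fin d₂ → Ω → ℝ} (hmeas : ∀ a i j, Measurable (Z a i j))
    (hindep : iIndepFun
      (fun (p : Fin 2 × Fin B × Fin d₂) ω => Z p.1 p.2.1 p.2.2 ω) μ)
    (hlaw : ∀ a i j, μ {ω | Z a i j ω = γ} = 1/2 ∧ μ {ω | Z a i j ω = -γ} = 1/2)
    (a : Fin 2) (i : Fin B) (c : ℝ) :
    ∫⁻ ω, ENNReal.ofReal (exp (c * ∑ j, Z a i j ω)) ∂μ
      ≤ ENNReal.ofReal (exp (c^2 * (γ^2 * d₂) / 2)) := by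
  classical
  have hmeas' : ∀ p : Fin 2 × Fin B × Fin d₂, Measurable (fun ω => Z p.1 p.2.1 p.2.2 ω) :=
    fun p => hmeas p.1 p.2.1 p.2.2
  have hm : ∀ t : ℝ, Measurable (fun x : ℝ => ENNReal.ofReal (exp (t * x))) := fun t =>
    ENNReal.measurable_ofReal.comp (Real.measurable_exp.comp (measurable_id.const_mul t))
  have main : ∀ s : Finset (Fin d₂),
      ∫⁻ ω, ENNReal.ofReal (exp (c * ∑ j ∈ s, Z a i j ω)) ∂μ
        ≤ ENNReal.ofReal (exp (c^2 * γ^2 * s.card / 2)) := by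
    intro s
    induction s using Finset.induction_on with
    | empty => simp
    | @insert j₀ s hj₀ ih =>
      have hinj : Function.Injective (fun j : Fin d₂ => ((a, i, j) : Fin 2 × Fin B × Fin d₂)) := by
        intro x y hxy
        simpa using hxy
      have hnm : (a, i, j₀) ∉ s.image (fun j => (a, i, j)) := by
        simp only [Finset.mem_image]
        rintro ⟨x, hx, hxe⟩
        have hxj : x = j₀ := by
          have := congrArg (fun p : Fin 2 × Fin B × Fin d₂ => p.2.2) hxe
          simpa using this
        exact hj₀ (hxj ▸ hx)
      have hInd := hindep.indepFun_finsetSum_of_notMem hmeas' hnm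
      have hsum_eq : (∑ p ∈ s.image (fun j => (a, i, j)),
          (fun ω => Z p.1 p.2.1 p.2.2 ω)) = fun ω => ∑ j ∈ s, Z a i j ω := by
        funext ω
        rw [Finset.sum_apply]
        rw [Finset.sum_image (fun x _ y _ h => hinj h)]
      rw [hsum_eq] at hInd
      have hInd2 : IndepFun (fun ω => ENNReal.ofReal (exp (c * ∑ j ∈ s, Z a i j ω)))
          (fun ω => ENNReal.ofReal (exp (c * Z a i j₀ ω))) μ :=
        hInd.comp (hm c) (hm c)
      have hmg1 : Measurable (fun ω => ENNReal.ofReal (exp (c * ∑ j ∈ s, Z a i j ω))) :=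
        (hm c).comp (Finset.measurable_sum s (fun j _ => hmeas a i j))
      have hmg2 : Measurable (fun ω => ENNReal.ofReal (exp (c * Z a i j₀ ω))) :=
        (hm c).comp (hmeas a i j₀)
      have heq : ∀ ω, ENNReal.ofReal (exp (c * ∑ j ∈ insert j₀ s, Z a i j ω))
          = ENNReal.ofReal (exp (c * ∑ j ∈ s, Z a i j ω))
            * ENNReal.ofReal (exp (c * Z a i j₀ ω)) := by
        intro ω
        rw [← ENNReal.ofReal_mul (exp_nonneg _), ← exp_add, Finset.sum_insert hj₀]
        ring_nf
      calc ∫⁻ ω, ENNReal.ofReal (exp (c * ∑ j ∈ insert j₀ s, Z a i j ω)) ∂μ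
          = ∫⁻ ω, ((fun ω => ENNReal.ofReal (exp (c * ∑ j ∈ s, Z a i j ω)))
              * (fun ω => ENNReal.ofReal (exp (c * Z a i j₀ ω)))) ω ∂μ := by
            apply lintegral_congr; intro ω; exact heq ω
        _ = (∫⁻ ω, ENNReal.ofReal (exp (c * ∑ j ∈ s, Z a i j ω)) ∂μ)
              * ∫⁻ ω, ENNReal.ofReal (exp (c * Z a i j₀ ω)) ∂μ :=
            lintegral_mul_eq_lintegral_mul_lintegral_of_indepFun hmg1 hmg2 hInd2
        _ ≤ ENNReal.ofReal (exp (c^2 * γ^2 * s.card / 2))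
              * ENNReal.ofReal (exp (c^2 * γ^2 / 2)) :=
            mul_le_mul' ih (twoPoint_lintegral hγ (hmeas a i j₀) (hlaw a i j₀).1
              (hlaw a i j₀).2 c)
        _ = ENNReal.ofReal (exp (c^2 * γ^2 * (insert j₀ s).card / 2)) := by
            rw [← ENNReal.ofReal_mul (exp_nonneg _), ← exp_add,
              Finset.card_insert_of_notMem hj₀]
            push_cast
            ring_nf
  have := main Finset.univ
  simpa [Finset.card_univ, mul_comm, mul_assoc, mul_div_assoc] using this

lemma gauss_point_identity {a : ℝ} (ha : 0 ≤ a) (x : ℝ) :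
    ∫ g : ℝ, exp (-(g^2) + (2 * Real.sqrt a * x) * g) = Real.sqrt π * exp (a * x^2) := by
  set β := 2 * Real.sqrt a * x with hβ
  have hfun : ∀ g : ℝ, exp (-(g^2) + β * g)
      = exp (β^2/4) * exp (-((g - β/2)^2)) := by
    intro g
    rw [← exp_add]
    congr 1
    ring
  have h1 : ∫ g : ℝ, exp (-(g^2) + β * g)
      = exp (β^2/4) * ∫ g : ℝ, exp (-((g - β/2)^2)) := by
    rw [← integral_const_mul]
    exact integral_congr_ae (Filter.Eventually.of_forall hfun)
  have h2 : ∫ g : ℝ, exp (-((g - β/2)^2)) = Real.sqrt π := by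
    have h3 : ∫ g : ℝ, exp (-(g^2)) = Real.sqrt π := by
      have := integral_gaussian (1 : ℝ)
      simpa using this
    rw [integral_sub_right_eq_self (fun g => exp (-(g^2))) (β/2)]
    exact h3
  rw [h1, h2]
  have hβsq : β^2/4 = a * x^2 := by
    rw [hβ]
    have : Real.sqrt a ^ 2 = a := Real.sq_sqrt ha
    nlinarith [this]
  rw [hβsq]
  ring

lemma gauss_integrable (β : ℝ) : Integrable (fun g : ℝ => exp (-(g^2) + β * g)) := by
  have h0 : Integrable (fun g : ℝ => exp (-(1:ℝ) * g^2)) := integrable_exp_neg_mul_sq one_pos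
  have h1 : Integrable (fun g : ℝ => exp (-(1:ℝ) * (g - β/2)^2)) :=
    h0.comp_sub_right (β/2)
  have h2 := h1.const_mul (exp (β^2/4))
  apply h2.congr
  filter_upwards with g
  rw [← exp_add]
  congr 1
  ring

lemma sq_exp_bound {Ω : Type} [MeasurableSpace Ω] {μ : Measure Ω} [IsProbabilityMeasure μ]
    {T : Ω → ℝ} (hT : Measurable T) {v a : ℝ} (hv : 0 < v) (ha : 0 ≤ a) (hav : a * v ≤ 1/4)
    (h : ∀ s : ℝ, ∫⁻ ω, ENNReal.ofReal (exp (s * T ω)) ∂μ ≤ ENNReal.ofReal (exp (s^2 * v / 2))) :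
    ∫⁻ ω, ENNReal.ofReal (exp (a * T ω ^ 2)) ∂μ ≤ ENNReal.ofReal (exp (2 * a * v)) := by
  have hb : (0:ℝ) < 1 - 2 * a * v := by nlinarith
  have hπ : (0:ℝ) < Real.sqrt π := Real.sqrt_pos.mpr pi_pos
  have hFmeas : Measurable (fun q : Ω × ℝ =>
      ENNReal.ofReal (exp (-(q.2^2) + (2 * Real.sqrt a * T q.1) * q.2))) := by
    apply ENNReal.measurable_ofReal.comp
    apply Real.measurable_exp.comp
    exact ((measurable_snd.pow_const 2).neg).add
      (((hT.comp measurable_fst).const_mul _).mul measurable_snd)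
  have claimA : ENNReal.ofReal (Real.sqrt π) * ∫⁻ ω, ENNReal.ofReal (exp (a * T ω ^ 2)) ∂μ
      = ∫⁻ ω, ∫⁻ g, ENNReal.ofReal (exp (-(g^2) + (2 * Real.sqrt a * T ω) * g)) ∂(volume) ∂μ := by
    rw [← lintegral_const_mul' (ENNReal.ofReal (Real.sqrt π)) _ ENNReal.ofReal_ne_top]
    apply lintegral_congr
    intro ω
    rw [← ENNReal.ofReal_mul hπ.le, ← gauss_point_identity ha (T ω),
      ofReal_integral_eq_lintegral_ofReal (gauss_integrable _)
        (Filter.Eventually.of_forall (fun g => exp_nonneg _))]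
  have claimB : ∫⁻ ω, ∫⁻ g, ENNReal.ofReal (exp (-(g^2) + (2 * Real.sqrt a * T ω) * g))
        ∂(volume) ∂μ
      = ∫⁻ g, ∫⁻ ω, ENNReal.ofReal (exp (-(g^2) + (2 * Real.sqrt a * T ω) * g)) ∂μ
        ∂(volume) :=
    lintegral_lintegral_swap hFmeas.aemeasurable
  have claimC : ∀ g : ℝ, ∫⁻ ω, ENNReal.ofReal (exp (-(g^2) + (2 * Real.sqrt a * T ω) * g)) ∂μ
      ≤ ENNReal.ofReal (exp (-((1 - 2 * a * v) * g^2))) := by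
    intro g
    have hsplit : ∀ ω : Ω, ENNReal.ofReal (exp (-(g^2) + (2 * Real.sqrt a * T ω) * g))
        = ENNReal.ofReal (exp (-(g^2)))
          * ENNReal.ofReal (exp ((2 * Real.sqrt a * g) * T ω)) := by
      intro ω
      rw [← ENNReal.ofReal_mul (exp_nonneg _), ← exp_add]
      congr 2
      ring
    calc ∫⁻ ω, ENNReal.ofReal (exp (-(g^2) + (2 * Real.sqrt a * T ω) * g)) ∂μ
        = ENNReal.ofReal (exp (-(g^2)))
            * ∫⁻ ω, ENNReal.ofReal (exp ((2 * Real.sqrt a * g) * T ω)) ∂μ := by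
          rw [← lintegral_const_mul' _ _ ENNReal.ofReal_ne_top]
          exact lintegral_congr hsplit
      _ ≤ ENNReal.ofReal (exp (-(g^2)))
            * ENNReal.ofReal (exp ((2 * Real.sqrt a * g)^2 * v / 2)) :=
          mul_le_mul_right (h _) _
      _ = ENNReal.ofReal (exp (-((1 - 2 * a * v) * g^2))) := by
          rw [← ENNReal.ofReal_mul (exp_nonneg _), ← exp_add]
          congr 2
          have hsq : Real.sqrt a ^ 2 = a := Real.sq_sqrt ha
          have h4 : (2 * Real.sqrt a * g)^2 = 4 * a * g^2 := by
            rw [mul_pow, mul_pow, hsq]; ring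
          linear_combination (v/2) * h4
  have claimD : ∫⁻ g, ENNReal.ofReal (exp (-((1 - 2 * a * v) * g^2))) ∂(volume)
      = ENNReal.ofReal (Real.sqrt (π / (1 - 2 * a * v))) := by
    rw [← ofReal_integral_eq_lintegral_ofReal]
    · congr 1
      have hgauss := integral_gaussian (1 - 2 * a * v)
      rw [← hgauss]
      apply integral_congr_ae
      filter_upwards with g
      rw [neg_mul]
    · have := integrable_exp_neg_mul_sq hb
      apply this.congr
      filter_upwards with g
      rw [neg_mul]
    · exact Filter.Eventually.of_forall (fun g => exp_nonneg _)
  have hmain : ENNReal.ofReal (Real.sqrt π) * ∫⁻ ω, ENNReal.ofReal (exp (a * T ω ^ 2)) ∂μ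
      ≤ ENNReal.ofReal (Real.sqrt (π / (1 - 2 * a * v))) := by
    rw [claimA, claimB, ← claimD]
    exact lintegral_mono claimC
  have hreal : Real.sqrt (π / (1 - 2 * a * v)) ≤ Real.sqrt π * exp (2 * a * v) := by
    have hsq : Real.sqrt π * exp (2 * a * v) = Real.sqrt (π * exp (2 * a * v) ^ 2) := by
      rw [Real.sqrt_mul pi_pos.le, Real.sqrt_sq (exp_nonneg _)]
    rw [hsq]
    apply Real.sqrt_le_sqrt
    have hexp : exp (2 * a * v) ^ 2 = exp (4 * a * v) := by
      rw [show (4:ℝ) * a * v = 2 * a * v + 2 * a * v by ring, Real.exp_add, sq]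
    rw [hexp]
    rw [div_le_iff₀ hb]
    have h1 : 1 + 4 * a * v ≤ exp (4 * a * v) := by
      have := Real.add_one_le_exp (4 * a * v)
      linarith
    nlinarith [pi_pos, h1, hb,
      mul_nonneg (mul_nonneg pi_pos.le hb.le)
        (by linarith : (0:ℝ) ≤ exp (4 * a * v) - (1 + 4 * a * v)),
      mul_nonneg (mul_nonneg pi_pos.le (mul_nonneg ha hv.le))
        (by linarith : (0:ℝ) ≤ 1 - 4 * (a * v))]
  calc ∫⁻ ω, ENNReal.ofReal (exp (a * T ω ^ 2)) ∂μ
      = (ENNReal.ofReal (Real.sqrt π))⁻¹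
          * (ENNReal.ofReal (Real.sqrt π) * ∫⁻ ω, ENNReal.ofReal (exp (a * T ω ^ 2)) ∂μ) := by
        rw [← mul_assoc, ENNReal.inv_mul_cancel (by simp [hπ]) ENNReal.ofReal_ne_top, one_mul]
    _ ≤ (ENNReal.ofReal (Real.sqrt π))⁻¹ * ENNReal.ofReal (Real.sqrt (π / (1 - 2 * a * v))) :=
        mul_le_mul_right hmain _
    _ ≤ (ENNReal.ofReal (Real.sqrt π))⁻¹
          * (ENNReal.ofReal (Real.sqrt π) * ENNReal.ofReal (exp (2 * a * v))) := by
        apply mul_le_mul_right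
        rw [← ENNReal.ofReal_mul hπ.le]
        exact ENNReal.ofReal_le_ofReal hreal
    _ = ENNReal.ofReal (exp (2 * a * v)) := by
        rw [← mul_assoc, ENNReal.inv_mul_cancel (by simp [hπ]) ENNReal.ofReal_ne_top, one_mul]

lemma pair_mgf_bound {Ω : Type} [MeasurableSpace Ω] {μ : Measure Ω} [IsProbabilityMeasure μ]
    {E : Type} [MeasurableSpace E] {ξ : Ω → E} {T : Ω → ℝ} (hξ : Measurable ξ)
    (hT : Measurable T) (hind : IndepFun ξ T μ) {φ : E → ℝ} (hφ : Measurable φ)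
    (t : ℝ) {v : ℝ}
    (hS : ∀ s : ℝ, ∫⁻ ω, ENNReal.ofReal (exp (s * φ (ξ ω))) ∂μ
      ≤ ENNReal.ofReal (exp (s^2 * v / 2))) :
    ∫⁻ ω, ENNReal.ofReal (exp (t * (φ (ξ ω) * T ω))) ∂μ
      ≤ ∫⁻ ω, ENNReal.ofReal (exp ((t^2 * v / 2) * T ω ^ 2)) ∂μ := by
  have hjoint : μ.map (fun ω => (ξ ω, T ω)) = (μ.map ξ).prod (μ.map T) :=
    (indepFun_iff_map_prod_eq_prod_map_map hξ.aemeasurable hT.aemeasurable).mp hind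
  have hmf : Measurable (fun q : E × ℝ => ENNReal.ofReal (exp (t * (φ q.1 * q.2)))) :=
    ENNReal.measurable_ofReal.comp (Real.measurable_exp.comp
      (((hφ.comp measurable_fst).mul measurable_snd).const_mul t))
  have hstep1 : ∫⁻ ω, ENNReal.ofReal (exp (t * (φ (ξ ω) * T ω))) ∂μ
      = ∫⁻ τ, ∫⁻ x, ENNReal.ofReal (exp (t * (φ x * τ))) ∂(μ.map ξ) ∂(μ.map T) := by
    rw [← lintegral_map hmf (hξ.prodMk hT), hjoint, lintegral_prod_symm' _ hmf]
  rw [hstep1]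
  have hinner : ∀ τ : ℝ, ∫⁻ x, ENNReal.ofReal (exp (t * (φ x * τ))) ∂(μ.map ξ)
      ≤ ENNReal.ofReal (exp ((t * τ)^2 * v / 2)) := by
    intro τ
    have hmg1 : Measurable fun x : E => ENNReal.ofReal (exp (t * (φ x * τ))) := by
      exact ENNReal.measurable_ofReal.comp (Real.measurable_exp.comp
        ((hφ.mul measurable_const).const_mul t))
    rw [lintegral_map hmg1 hξ]
    calc ∫⁻ ω, ENNReal.ofReal (exp (t * (φ (ξ ω) * τ))) ∂μ
        = ∫⁻ ω, ENNReal.ofReal (exp ((t * τ) * φ (ξ ω))) ∂μ := by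
          apply lintegral_congr; intro ω
          congr 2; ring
      _ ≤ ENNReal.ofReal (exp ((t * τ)^2 * v / 2)) := hS (t * τ)
  calc ∫⁻ τ, ∫⁻ x, ENNReal.ofReal (exp (t * (φ x * τ))) ∂(μ.map ξ) ∂(μ.map T)
      ≤ ∫⁻ τ, ENNReal.ofReal (exp ((t^2 * v / 2) * τ^2)) ∂(μ.map T) := by
        apply lintegral_mono
        intro τ
        refine (hinner τ).trans_eq ?_
        congr 2; ring
    _ = ∫⁻ ω, ENNReal.ofReal (exp ((t^2 * v / 2) * T ω ^ 2)) ∂μ := by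
        have hmg2 : Measurable fun τ : ℝ => ENNReal.ofReal (exp ((t^2 * v / 2) * τ^2)) := by
          exact ENNReal.measurable_ofReal.comp (Real.measurable_exp.comp
            ((measurable_id.pow_const 2).const_mul _))
        rw [lintegral_map hmg2 hT]

lemma row_V_bound {Ω : Type} [MeasurableSpace Ω] {μ : Measure Ω} [IsProbabilityMeasure μ]
    {B d₂ : ℕ} (hd₂ : 0 < d₂) {γ : ℝ} (hγ : 0 < γ)
    {Z : Fin 2 → Fin B → Fin d₂ → Ω → ℝ} (hmeas : ∀ a i j, Measurable (Z a i j))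
    (hindep : iIndepFun
      (fun (p : Fin 2 × Fin B × Fin d₂) ω => Z p.1 p.2.1 p.2.2 ω) μ)
    (hlaw : ∀ a i j, μ {ω | Z a i j ω = γ} = 1/2 ∧ μ {ω | Z a i j ω = -γ} = 1/2)
    (i : Fin B) (t : ℝ) (ht : t^2 * (γ^2 * d₂)^2 ≤ 1/2) :
    ∫⁻ ω, ENNReal.ofReal (exp (t * ((∑ j, Z 0 i j ω) * (∑ k, Z 1 i k ω)))) ∂μ
      ≤ ENNReal.ofReal (exp (t^2 * (γ^2 * d₂)^2)) := by
  classical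
  set v : ℝ := γ^2 * d₂ with hv
  have hvpos : 0 < v := by positivity
  have hmeas' : ∀ p : Fin 2 × Fin B × Fin d₂, Measurable (fun ω => Z p.1 p.2.1 p.2.2 ω) :=
    fun p => hmeas p.1 p.2.1 p.2.2
  set ξ : Ω → (Fin d₂ → ℝ) := fun ω j => Z 0 i j ω with hξdef
  set T : Ω → ℝ := fun ω => ∑ k, Z 1 i k ω with hTdef
  have hξ : Measurable ξ := measurable_pi_lambda _ (fun j => hmeas 0 i j)
  have hT : Measurable T := Finset.measurable_sum _ (fun k _ => hmeas 1 i k)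
  -- independence of the X-row and the Y-row
  have hind : IndepFun ξ T μ := by
    set S : Finset (Fin 2 × Fin B × Fin d₂) := {0} ×ˢ ({i} ×ˢ Finset.univ) with hS
    set S' : Finset (Fin 2 × Fin B × Fin d₂) := {1} ×ˢ ({i} ×ˢ Finset.univ) with hS'
    have hdisj : Disjoint S S' := by
      rw [Finset.disjoint_left]
      intro p hp hp'
      simp only [hS, hS', Finset.mem_product, Finset.mem_singleton] at hp hp'
      rw [hp.1] at hp'
      exact absurd hp'.1 (by decide)
    have hbase := hindep.indepFun_finset S S' hdisj hmeas'
    have hg₁ : Measurable (fun w : (S → ℝ) => (fun j : Fin d₂ =>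
        w ⟨(0, i, j), by simp [hS, Finset.mem_product]⟩)) :=
      measurable_pi_lambda _ (fun j => measurable_pi_apply _)
    have hg₂ : Measurable (fun w : (S' → ℝ) => ∑ k : Fin d₂,
        w ⟨(1, i, k), by simp [hS', Finset.mem_product]⟩) :=
      Finset.measurable_sum _ (fun k _ => measurable_pi_apply _)
    exact hbase.comp hg₁ hg₂
  have hφ : Measurable (fun x : Fin d₂ → ℝ => ∑ j, x j) :=
    Finset.measurable_sum _ (fun j _ => measurable_pi_apply _)
  have hS0 : ∀ s : ℝ, ∫⁻ ω, ENNReal.ofReal (exp (s * (∑ j, ξ ω j))) ∂μ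
      ≤ ENNReal.ofReal (exp (s^2 * v / 2)) := by
    intro s
    exact row_mgf hγ hmeas hindep hlaw 0 i s
  have hpair := pair_mgf_bound (μ := μ) hξ hT hind hφ t hS0
  have hST : ∀ s : ℝ, ∫⁻ ω, ENNReal.ofReal (exp (s * T ω)) ∂μ
      ≤ ENNReal.ofReal (exp (s^2 * v / 2)) := fun s => row_mgf hγ hmeas hindep hlaw 1 i s
  have hsq := sq_exp_bound hT hvpos (by positivity : (0:ℝ) ≤ t^2 * v / 2)
    (by nlinarith : t^2 * v / 2 * v ≤ 1/4) hST
  calc ∫⁻ ω, ENNReal.ofReal (exp (t * ((∑ j, Z 0 i j ω) * (∑ k, Z 1 i k ω)))) ∂μ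
      ≤ ∫⁻ ω, ENNReal.ofReal (exp ((t^2 * v / 2) * T ω ^ 2)) ∂μ := hpair
    _ ≤ ENNReal.ofReal (exp (2 * (t^2 * v / 2) * v)) := hsq
    _ = ENNReal.ofReal (exp (t^2 * (γ^2 * d₂)^2)) := by
        congr 1
        rw [hv]
        ring

lemma rows_product_bound {Ω : Type} [MeasurableSpace Ω] {μ : Measure Ω} [IsProbabilityMeasure μ]
    {B d₂ : ℕ} (hd₂ : 0 < d₂) {γ : ℝ} (hγ : 0 < γ)
    {Z : Fin 2 → Fin B → Fin d₂ → Ω → ℝ} (hmeas : ∀ a i j, Measurable (Z a i j))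
    (hindep : iIndepFun
      (fun (p : Fin 2 × Fin B × Fin d₂) ω => Z p.1 p.2.1 p.2.2 ω) μ)
    (hlaw : ∀ a i j, μ {ω | Z a i j ω = γ} = 1/2 ∧ μ {ω | Z a i j ω = -γ} = 1/2)
    (t : ℝ) (ht : t^2 * (γ^2 * d₂)^2 ≤ 1/2) :
    ∫⁻ ω, ENNReal.ofReal (exp (t * ∑ i, ((∑ j, Z 0 i j ω) * (∑ k, Z 1 i k ω)))) ∂μ
      ≤ ENNReal.ofReal (exp (B * (t^2 * (γ^2 * d₂)^2))) := by
  classical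
  have hmeas' : ∀ p : Fin 2 × Fin B × Fin d₂, Measurable (fun ω => Z p.1 p.2.1 p.2.2 ω) :=
    fun p => hmeas p.1 p.2.1 p.2.2
  set V : Fin B → Ω → ℝ := fun i ω => (∑ j, Z 0 i j ω) * (∑ k, Z 1 i k ω) with hV
  have hVmeas : ∀ i, Measurable (V i) := fun i =>
    (Finset.measurable_sum _ (fun j _ => hmeas 0 i j)).mul
      (Finset.measurable_sum _ (fun k _ => hmeas 1 i k))
  have hm : ∀ c : ℝ, Measurable (fun x : ℝ => ENNReal.ofReal (exp (c * x))) := fun c =>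
    ENNReal.measurable_ofReal.comp (Real.measurable_exp.comp (measurable_id.const_mul c))
  have main : ∀ s : Finset (Fin B),
      ∫⁻ ω, ENNReal.ofReal (exp (t * ∑ i ∈ s, V i ω)) ∂μ
        ≤ ENNReal.ofReal (exp (s.card * (t^2 * (γ^2 * d₂)^2))) := by
    intro s
    induction s using Finset.induction_on with
    | empty => simp
    | @insert i₀ s hi₀ ih =>
      -- independence between the partial sum over s and V i₀
      have hind : IndepFun (fun ω => ∑ i ∈ s, V i ω) (V i₀) μ := by
        set Ss : Finset (Fin 2 × Fin B × Fin d₂) := Finset.univ ×ˢ (s ×ˢ Finset.univ) with hSs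
        set S₀ : Finset (Fin 2 × Fin B × Fin d₂) :=
          Finset.univ ×ˢ ({i₀} ×ˢ Finset.univ) with hS₀
        have hdisj : Disjoint Ss S₀ := by
          rw [Finset.disjoint_left]
          intro p hp hp'
          simp only [hSs, hS₀, Finset.mem_product, Finset.mem_univ, Finset.mem_singleton,
            true_and] at hp hp'
          exact hi₀ (hp'.1 ▸ hp.1)
        have hbase := hindep.indepFun_finset Ss S₀ hdisj hmeas'
        have hg₁ : Measurable (fun w : (Ss → ℝ) => ∑ i ∈ s.attach,
            ((∑ j : Fin d₂, w ⟨(0, i.1, j), by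
                simp [hSs, Finset.mem_product, i.2]⟩)
              * (∑ k : Fin d₂, w ⟨(1, i.1, k), by
                simp [hSs, Finset.mem_product, i.2]⟩))) := by
          apply Finset.measurable_sum
          intro i _
          apply Measurable.mul
          · apply Finset.measurable_sum
            intro j _
            apply measurable_pi_apply
          · apply Finset.measurable_sum
            intro k _
            apply measurable_pi_apply
        have hg₂ : Measurable (fun w : (S₀ → ℝ) =>
            (∑ j : Fin d₂, w ⟨(0, i₀, j), by simp [hS₀, Finset.mem_product]⟩)
              * (∑ k : Fin d₂, w ⟨(1, i₀, k), by simp [hS₀, Finset.mem_product]⟩)) := by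
          apply Measurable.mul
          · apply Finset.measurable_sum
            intro j _
            apply measurable_pi_apply
          · apply Finset.measurable_sum
            intro k _
            apply measurable_pi_apply
        have hcomp := hbase.comp hg₁ hg₂
        have he₁ : (fun ω => ∑ i ∈ s.attach,
            ((∑ j : Fin d₂, Z 0 i.1 j ω) * (∑ k : Fin d₂, Z 1 i.1 k ω)))
            = fun ω => ∑ i ∈ s, V i ω := by
          funext ω
          exact Finset.sum_attach s
            (fun i => (∑ j : Fin d₂, Z 0 i j ω) * (∑ k : Fin d₂, Z 1 i k ω))
        exact he₁ ▸ hcomp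
      have hind2 : IndepFun (fun ω => ENNReal.ofReal (exp (t * ∑ i ∈ s, V i ω)))
          (fun ω => ENNReal.ofReal (exp (t * V i₀ ω))) μ :=
        hind.comp (hm t) (hm t)
      have hmg1 : Measurable (fun ω => ENNReal.ofReal (exp (t * ∑ i ∈ s, V i ω))) :=
        (hm t).comp (Finset.measurable_sum _ (fun i _ => hVmeas i))
      have hmg2 : Measurable (fun ω => ENNReal.ofReal (exp (t * V i₀ ω))) :=
        (hm t).comp (hVmeas i₀)
      calc ∫⁻ ω, ENNReal.ofReal (exp (t * ∑ i ∈ insert i₀ s, V i ω)) ∂μ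
          = ∫⁻ ω, ((fun ω => ENNReal.ofReal (exp (t * ∑ i ∈ s, V i ω)))
              * fun ω => ENNReal.ofReal (exp (t * V i₀ ω))) ω ∂μ := by
            apply lintegral_congr
            intro ω
            simp only [Pi.mul_apply]
            rw [← ENNReal.ofReal_mul (exp_nonneg _), ← exp_add, Finset.sum_insert hi₀]
            ring_nf
        _ = (∫⁻ ω, ENNReal.ofReal (exp (t * ∑ i ∈ s, V i ω)) ∂μ)
              * ∫⁻ ω, ENNReal.ofReal (exp (t * V i₀ ω)) ∂μ :=
            lintegral_mul_eq_lintegral_mul_lintegral_of_indepFun hmg1 hmg2 hind2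
        _ ≤ ENNReal.ofReal (exp (s.card * (t^2 * (γ^2 * d₂)^2)))
              * ENNReal.ofReal (exp (t^2 * (γ^2 * d₂)^2)) :=
            mul_le_mul' ih (row_V_bound hd₂ hγ hmeas hindep hlaw i₀ t ht)
        _ = ENNReal.ofReal (exp ((insert i₀ s).card * (t^2 * (γ^2 * d₂)^2))) := by
            rw [← ENNReal.ofReal_mul (exp_nonneg _), ← exp_add,
              Finset.card_insert_of_notMem hi₀]
            push_cast
            ring_nf
  have := main Finset.univ
  simpa [Finset.card_univ] using this

lemma chernoff_markov {Ω : Type} [MeasurableSpace Ω] {μ : Measure Ω} [IsProbabilityMeasure μ]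
    {W : Ω → ℝ} (hWm : Measurable W) {t ε R : ℝ} (ht : 0 ≤ t) (hR : 0 ≤ R)
    (hbound : ∫⁻ ω, ENNReal.ofReal (exp (t * W ω)) ∂μ ≤ ENNReal.ofReal R) :
    μ {ω | ε ≤ W ω} ≤ ENNReal.ofReal (exp (-(t * ε)) * R) := by
  have hfm : AEMeasurable (fun ω => ENNReal.ofReal (exp (t * W ω))) μ := by
    apply Measurable.aemeasurable
    exact ENNReal.measurable_ofReal.comp (Real.measurable_exp.comp (hWm.const_mul t))
  have hmarkov := mul_meas_ge_le_lintegral₀ hfm (ENNReal.ofReal (exp (t * ε)))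
  have hsub : {ω | ε ≤ W ω}
      ⊆ {ω | ENNReal.ofReal (exp (t * ε)) ≤ ENNReal.ofReal (exp (t * W ω))} := fun ω hω =>
    ENNReal.ofReal_le_ofReal (exp_le_exp.mpr (mul_le_mul_of_nonneg_left hω ht))
  have h1 : ENNReal.ofReal (exp (t * ε)) * μ {ω | ε ≤ W ω} ≤ ENNReal.ofReal R :=
    le_trans (mul_le_mul_right (measure_mono hsub) _) (le_trans hmarkov hbound)
  calc μ {ω | ε ≤ W ω}
      = (ENNReal.ofReal (exp (t * ε)))⁻¹
          * (ENNReal.ofReal (exp (t * ε)) * μ {ω | ε ≤ W ω}) := by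
        rw [← mul_assoc, ENNReal.inv_mul_cancel (by simp [exp_pos]) ENNReal.ofReal_ne_top,
          one_mul]
    _ ≤ (ENNReal.ofReal (exp (t * ε)))⁻¹ * ENNReal.ofReal R := mul_le_mul_right h1 _
    _ = ENNReal.ofReal (exp (-(t * ε)) * R) := by
        rw [← ENNReal.ofReal_inv_of_pos (exp_pos _),
          ← ENNReal.ofReal_mul (by positivity), ← exp_neg]

/-- For independent `B × d₂` matrices `X, Y` with i.i.d. entries uniform on `{-γ, γ}`,
`P(|∑_{i,j,k} X_{ij} Y_{ik}| ≥ γ² B d₂² / 8) ≤ 2 exp(-c B d₂)`. -/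
theorem cross_term_XY_bound :
    ∃ c : ℝ, 0 < c ∧
      ∀ (Ω : Type) (_ : MeasurableSpace Ω) (μ : Measure Ω), IsProbabilityMeasure μ →
        ∀ (B d₂ : ℕ), 0 < B → 0 < d₂ →
          ∀ (γ : ℝ), 0 < γ →
            ∀ (Z : Fin 2 → Fin B → Fin d₂ → Ω → ℝ),
              (∀ a i j, Measurable (Z a i j)) →
              iIndepFun
                (fun (p : Fin 2 × Fin B × Fin d₂) ω => Z p.1 p.2.1 p.2.2 ω) μ →
              (∀ a i j, μ {ω | Z a i j ω = γ} = 1/2 ∧ μ {ω | Z a i j ω = -γ} = 1/2) →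
              μ {ω | γ ^ 2 * B * (d₂ : ℝ) ^ 2 / 8 ≤
                  |∑ i : Fin B, ∑ j : Fin d₂, ∑ k : Fin d₂, Z 0 i j ω * Z 1 i k ω|} ≤
                ENNReal.ofReal (2 * Real.exp (-(c * B * d₂))) := by
  refine ⟨1/256, by norm_num, ?_⟩
  intro Ω mΩ μ hμ B d₂ hB hd₂ γ hγ Z hmeas hindep hlaw
  haveI := hμ
  classical
  set W : Ω → ℝ := fun ω => ∑ i, ((∑ j, Z 0 i j ω) * (∑ k, Z 1 i k ω)) with hWdef
  have hWm : Measurable W := by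
    apply Finset.measurable_sum
    intro i _
    exact (Finset.measurable_sum _ (fun j _ => hmeas 0 i j)).mul
      (Finset.measurable_sum _ (fun k _ => hmeas 1 i k))
  have hWeq : ∀ ω, (∑ i : Fin B, ∑ j : Fin d₂, ∑ k : Fin d₂, Z 0 i j ω * Z 1 i k ω) = W ω := by
    intro ω
    apply Finset.sum_congr rfl
    intro i _
    rw [Finset.sum_mul_sum]
  set ε : ℝ := γ ^ 2 * B * (d₂ : ℝ) ^ 2 / 8 with hεdef
  set t₀ : ℝ := 1 / (16 * (γ^2 * (d₂ : ℝ))) with ht₀def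
  have hd₂' : (1:ℝ) ≤ (d₂ : ℝ) := by exact_mod_cast hd₂
  have hB' : (0:ℝ) < (B : ℝ) := by exact_mod_cast hB
  have hvpos : (0:ℝ) < γ^2 * (d₂ : ℝ) := by positivity
  have ht₀pos : 0 < t₀ := by rw [ht₀def]; positivity
  have ht₀sq : t₀^2 * (γ^2 * (d₂:ℝ))^2 = 1/256 := by
    rw [ht₀def]
    field_simp
    ring
  have ht : t₀^2 * (γ^2 * (d₂:ℝ))^2 ≤ 1/2 := by rw [ht₀sq]; norm_num
  have ht' : (-t₀)^2 * (γ^2 * (d₂:ℝ))^2 ≤ 1/2 := by rw [neg_pow]; simpa using ht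
  -- positive side
  have hbound₁ := rows_product_bound hd₂ hγ hmeas hindep hlaw t₀ ht
  have hA : μ {ω | ε ≤ W ω}
      ≤ ENNReal.ofReal (exp (-(t₀ * ε)) * exp (B * (t₀^2 * (γ^2 * (d₂:ℝ))^2))) :=
    chernoff_markov hWm ht₀pos.le (exp_nonneg _) hbound₁
  -- negative side
  have hbound₂ : ∫⁻ ω, ENNReal.ofReal (exp (t₀ * (-W ω))) ∂μ
      ≤ ENNReal.ofReal (exp (B * (t₀^2 * (γ^2 * (d₂:ℝ))^2))) := by
    have h2 := rows_product_bound hd₂ hγ hmeas hindep hlaw (-t₀) ht'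
    have heq : ∀ ω, ENNReal.ofReal (exp (t₀ * (-W ω)))
        = ENNReal.ofReal (exp ((-t₀) * ∑ i, ((∑ j, Z 0 i j ω) * (∑ k, Z 1 i k ω)))) := by
      intro ω
      rw [hWdef]
      congr 2
      ring
    calc ∫⁻ ω, ENNReal.ofReal (exp (t₀ * (-W ω))) ∂μ
        = ∫⁻ ω, ENNReal.ofReal
            (exp ((-t₀) * ∑ i, ((∑ j, Z 0 i j ω) * (∑ k, Z 1 i k ω)))) ∂μ :=
          lintegral_congr heq
      _ ≤ ENNReal.ofReal (exp (B * ((-t₀)^2 * (γ^2 * (d₂:ℝ))^2))) := h2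
      _ = ENNReal.ofReal (exp (B * (t₀^2 * (γ^2 * (d₂:ℝ))^2))) := by rw [neg_pow]; norm_num
  have hA' : μ {ω | ε ≤ -W ω}
      ≤ ENNReal.ofReal (exp (-(t₀ * ε)) * exp (B * (t₀^2 * (γ^2 * (d₂:ℝ))^2))) :=
    chernoff_markov hWm.neg ht₀pos.le (exp_nonneg _) hbound₂
  -- event inclusion
  have hsub : {ω | γ ^ 2 * B * (d₂ : ℝ) ^ 2 / 8 ≤
      |∑ i : Fin B, ∑ j : Fin d₂, ∑ k : Fin d₂, Z 0 i j ω * Z 1 i k ω|}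
      ⊆ {ω | ε ≤ W ω} ∪ {ω | ε ≤ -W ω} := by
    intro ω hω
    simp only [Set.mem_setOf_eq] at hω
    rw [hWeq ω] at hω
    rcases le_abs.mp hω with h | h
    · exact Or.inl h
    · exact Or.inr h
  -- numeric exponent bound
  have hexp_le : exp (-(t₀ * ε)) * exp ((B:ℝ) * (t₀^2 * (γ^2 * (d₂:ℝ))^2))
      ≤ exp (-(1/256 * B * d₂)) := by
    rw [← exp_add]
    apply exp_le_exp.mpr
    have htε : t₀ * ε = (B:ℝ) * (d₂:ℝ) / 128 := by
      rw [ht₀def, hεdef]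
      field_simp
      ring
    rw [htε, ht₀sq]
    have hBd : (B:ℝ) * 1 ≤ (B:ℝ) * (d₂:ℝ) := by
      apply mul_le_mul_of_nonneg_left hd₂' hB'.le
    nlinarith [hBd]
  calc μ {ω | γ ^ 2 * B * (d₂ : ℝ) ^ 2 / 8 ≤
      |∑ i : Fin B, ∑ j : Fin d₂, ∑ k : Fin d₂, Z 0 i j ω * Z 1 i k ω|}
      ≤ μ ({ω | ε ≤ W ω} ∪ {ω | ε ≤ -W ω}) := measure_mono hsub
    _ ≤ μ {ω | ε ≤ W ω} + μ {ω | ε ≤ -W ω} := measure_union_le _ _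
    _ ≤ ENNReal.ofReal (exp (-(t₀ * ε)) * exp (B * (t₀^2 * (γ^2 * (d₂:ℝ))^2)))
        + ENNReal.ofReal (exp (-(t₀ * ε)) * exp (B * (t₀^2 * (γ^2 * (d₂:ℝ))^2))) :=
        add_le_add hA hA'
    _ ≤ ENNReal.ofReal (exp (-(1/256 * B * d₂))) + ENNReal.ofReal (exp (-(1/256 * B * d₂))) :=
        add_le_add (ENNReal.ofReal_le_ofReal hexp_le) (ENNReal.ofReal_le_ofReal hexp_le)
    _ = ENNReal.ofReal (2 * exp (-(1/256 * B * d₂))) := by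
        rw [← ENNReal.ofReal_add (exp_nonneg _) (exp_nonneg _)]
        congr 1
        ring
end

section
/- Let X be a B × d₂ random matrix with i.i.d. entries uniform on {-γ, γ}. Then P(|∑_{i=1}^{B} ∑_{j,k=1}^{d₂} X_{ij}X_{ik} - γ²Bd₂| ≥ γ²Bd₂²/8) ≤ 2exp(-cBd₂) for a universal constant c > 0, provided d₂ ≥ 2. -/
open MeasureTheory ProbabilityTheory Real Finset

section Aux

variable {Ω : Type} [MeasurableSpace Ω] {μ : Measure Ω}

lemma integrable_exp_bounded [IsProbabilityMeasure μ] {W : Ω → ℝ} (hW : Measurable W) {C : ℝ}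
    (hb : ∀ᵐ ω ∂μ, |W ω| ≤ C) (t : ℝ) : Integrable (fun ω => exp (t * W ω)) μ := by
  refine Integrable.mono' (integrable_const (exp (|t| * C)))
    ((hW.const_mul t).exp.aestronglyMeasurable) ?_
  filter_upwards [hb] with ω hω
  rw [Real.norm_eq_abs, abs_exp]
  refine exp_le_exp.2 ?_
  calc t * W ω ≤ |t * W ω| := le_abs_self _
  _ = |t| * |W ω| := abs_mul _ _
  _ ≤ |t| * C := by
      refine mul_le_mul_of_nonneg_left hω (abs_nonneg _)

/-- Hoeffding-lite: mean-zero bounded variable has subgaussian mgf. -/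
lemma hoeffding_lite [IsProbabilityMeasure μ] {W : Ω → ℝ} (hW : Measurable W)
    {M : ℝ} (hM : 0 < M) (hb : ∀ᵐ ω ∂μ, |W ω| ≤ M) (hmean : μ[W] = 0) (t : ℝ) :
    mgf W μ t ≤ exp ((t * M) ^ 2 / 2) := by
  have hWint : Integrable W μ :=
    Integrable.mono' (integrable_const M) hW.aestronglyMeasurable hb
  have hint : Integrable (fun ω => exp (t * W ω)) μ := integrable_exp_bounded hW hb t
  have key : ∀ᵐ ω ∂μ, exp (t * W ω) ≤
      ((M - W ω) / (2 * M)) * exp (-(t * M)) + ((M + W ω) / (2 * M)) * exp (t * M) := by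
    filter_upwards [hb] with ω hω
    obtain ⟨h1, h2⟩ := abs_le.1 hω
    have ha : (0:ℝ) ≤ (M - W ω) / (2 * M) := div_nonneg (by linarith) (by linarith)
    have hb' : (0:ℝ) ≤ (M + W ω) / (2 * M) := div_nonneg (by linarith) (by linarith)
    have hab : (M - W ω) / (2 * M) + (M + W ω) / (2 * M) = 1 := by
      field_simp; ring
    have hc := convexOn_exp.2 (Set.mem_univ (-(t * M))) (Set.mem_univ (t * M)) ha hb' hab
    simp only [smul_eq_mul] at hc
    have harg : (M - W ω) / (2 * M) * (-(t * M)) + (M + W ω) / (2 * M) * (t * M) = t * W ω := by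
      field_simp
      ring
    rwa [harg] at hc
  have hA : Integrable (fun ω => (M - W ω) / (2 * M) * exp (-(t * M))) μ := by
    apply Integrable.mul_const
    exact ((integrable_const M).sub hWint).div_const _
  have hB : Integrable (fun ω => (M + W ω) / (2 * M) * exp (t * M)) μ := by
    apply Integrable.mul_const
    exact ((integrable_const M).add hWint).div_const _
  have e1 : ∫ ω, (M - W ω) ∂μ = M := by
    rw [integral_sub (integrable_const M) hWint, hmean, integral_const]; simp
  have e2 : ∫ ω, (M + W ω) ∂μ = M := by
    rw [integral_add (integrable_const M) hWint, hmean, integral_const]; simp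
  have h1 : mgf W μ t ≤ cosh (t * M) := by
    calc mgf W μ t = ∫ ω, exp (t * W ω) ∂μ := rfl
    _ ≤ ∫ ω, (((M - W ω) / (2 * M)) * exp (-(t * M)) + ((M + W ω) / (2 * M)) * exp (t * M)) ∂μ :=
        integral_mono_ae hint (hA.add hB) key
    _ = (∫ ω, (M - W ω) / (2 * M) * exp (-(t * M)) ∂μ)
        + ∫ ω, (M + W ω) / (2 * M) * exp (t * M) ∂μ := integral_add hA hB
    _ = (∫ ω, (M - W ω) / (2 * M) ∂μ) * exp (-(t * M))
        + (∫ ω, (M + W ω) / (2 * M) ∂μ) * exp (t * M) := by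
        rw [integral_mul_const, integral_mul_const]
    _ = ((∫ ω, (M - W ω) ∂μ) / (2 * M)) * exp (-(t * M))
        + ((∫ ω, (M + W ω) ∂μ) / (2 * M)) * exp (t * M) := by
        rw [integral_div, integral_div]
    _ = cosh (t * M) := by
        rw [e1, e2, cosh_eq]
        field_simp
        ring
  exact h1.trans (cosh_le_exp_half_sq _)

lemma two_point_ae [IsProbabilityMeasure μ] {Y : Ω → ℝ} (hY : Measurable Y) {γ : ℝ}
    (hγ : 0 < γ) (h1 : μ {ω | Y ω = γ} = 1/2) (h2 : μ {ω | Y ω = -γ} = 1/2) :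
    ∀ᵐ ω ∂μ, Y ω = γ ∨ Y ω = -γ := by
  have hA : MeasurableSet {ω | Y ω = γ} := hY (measurableSet_singleton γ)
  have hB : MeasurableSet {ω | Y ω = -γ} := hY (measurableSet_singleton (-γ))
  have hd : Disjoint {ω | Y ω = γ} {ω | Y ω = -γ} := by
    rw [Set.disjoint_left]
    intro ω hω1 hω2
    simp only [Set.mem_setOf_eq] at hω1 hω2
    rw [hω1] at hω2
    linarith
  have hu : μ ({ω | Y ω = γ} ∪ {ω | Y ω = -γ}) = 1 := by
    rw [measure_union hd hB, h1, h2]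
    rw [ENNReal.add_halves]
  rw [ae_iff]
  have hset : {ω | ¬(Y ω = γ ∨ Y ω = -γ)} = ({ω | Y ω = γ} ∪ {ω | Y ω = -γ})ᶜ := by
    ext ω; simp [not_or]
  rw [hset, measure_compl (hA.union hB) (measure_ne_top μ _), hu, measure_univ, tsub_self]

lemma two_point_integral_comp [IsProbabilityMeasure μ] {Y : Ω → ℝ} (hY : Measurable Y) {γ : ℝ}
    (hγ : 0 < γ) (h1 : μ {ω | Y ω = γ} = 1/2) (h2 : μ {ω | Y ω = -γ} = 1/2)
    (g : ℝ → ℝ) :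
    ∫ ω, g (Y ω) ∂μ = (g γ + g (-γ)) / 2 := by
  have hA : MeasurableSet {ω | Y ω = γ} := hY (measurableSet_singleton γ)
  have hB : MeasurableSet {ω | Y ω = -γ} := hY (measurableSet_singleton (-γ))
  have hae := two_point_ae hY hγ h1 h2
  have hcong : (fun ω => g (Y ω)) =ᵐ[μ]
      (fun ω => Set.indicator {ω | Y ω = γ} (fun _ => g γ) ω
        + Set.indicator {ω | Y ω = -γ} (fun _ => g (-γ)) ω) := by
    filter_upwards [hae] with ω hω
    have hne : γ ≠ -γ := by linarith
    rcases hω with hω | hω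
    · have : ω ∉ {ω | Y ω = -γ} := by simp [Set.mem_setOf_eq, hω, hne]
      simp [Set.indicator_apply, Set.mem_setOf_eq, hω, this, hne]
    · have : ω ∉ {ω | Y ω = γ} := by
        simp only [Set.mem_setOf_eq, hω]
        exact fun hc => hne hc.symm
      simp [Set.indicator_apply, Set.mem_setOf_eq, hω, this]
  rw [integral_congr_ae hcong, integral_add ((integrable_const _).indicator hA)
    ((integrable_const _).indicator hB), integral_indicator_const _ hA,
    integral_indicator_const _ hB, measureReal_def, measureReal_def, h1, h2]
  have : ((1:ENNReal)/2).toReal = (1:ℝ)/2 := by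
    rw [ENNReal.toReal_div]; simp
  rw [this]
  simp only [smul_eq_mul]
  ring

lemma rows_indep {B d₂ : ℕ} {X : Fin B → Fin d₂ → Ω → ℝ}
    (hmeas : ∀ i j, Measurable (X i j))
    (hInd : iIndepFun (fun (p : Fin B × Fin d₂) ω => X p.1 p.2 ω) μ)
    (h : ℝ → ℝ) (hh : Measurable h) {a : Fin B} {s : Finset (Fin B)} (ha : a ∉ s) :
    IndepFun (fun ω => h (∑ j, X a j ω)) (fun ω => ∑ i ∈ s, h (∑ j, X i j ω)) μ := by
  classical
  have hdisj : Disjoint ({a} ×ˢ (univ : Finset (Fin d₂))) (s ×ˢ univ) := by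
    simp only [Finset.disjoint_left, Finset.mem_product, Finset.mem_singleton]
    rintro ⟨i, j⟩ ⟨rfl, -⟩ ⟨hi, -⟩
    exact ha hi
  have base := hInd.indepFun_finset _ _ hdisj (fun p => hmeas p.1 p.2)
  let S1 : Finset (Fin B × Fin d₂) := {a} ×ˢ (univ : Finset (Fin d₂))
  let S2 : Finset (Fin B × Fin d₂) := s ×ˢ (univ : Finset (Fin d₂))
  let Φ : (S1 → ℝ) → ℝ := fun v => h (∑ j : Fin d₂, v ⟨(a, j), by simp [S1]⟩)
  let Ψ : (S2 → ℝ) → ℝ := fun v =>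
    ∑ i ∈ s.attach, h (∑ j : Fin d₂, v ⟨(i.1, j), by simp [S2, i.2]⟩)
  have hΦ : Measurable Φ :=
    hh.comp (Finset.measurable_sum _ (fun j _ => measurable_pi_apply _))
  have hΨ : Measurable Ψ :=
    Finset.measurable_sum _ (fun i _ =>
      hh.comp (Finset.measurable_sum _ fun j _ => measurable_pi_apply _))
  have hcomp := base.comp hΦ hΨ
  have e1 : (Φ ∘ fun ω (p : S1) => X (p : Fin B × Fin d₂).1 (p : Fin B × Fin d₂).2 ω)
      = fun ω => h (∑ j, X a j ω) := rfl
  have e2 : (Ψ ∘ fun ω (p : S2) => X (p : Fin B × Fin d₂).1 (p : Fin B × Fin d₂).2 ω)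
      = fun ω => ∑ i ∈ s, h (∑ j, X i j ω) := by
    funext ω
    simp only [Function.comp_apply, Ψ]
    exact Finset.sum_attach s (fun i => h (∑ j, X i j ω))
  rw [e1, e2] at hcomp
  exact hcomp

lemma mgf_row_sum [IsProbabilityMeasure μ] {B d₂ : ℕ} {X : Fin B → Fin d₂ → Ω → ℝ}
    (hmeas : ∀ i j, Measurable (X i j))
    (hInd : iIndepFun (fun (p : Fin B × Fin d₂) ω => X p.1 p.2 ω) μ)
    (h : ℝ → ℝ) (hh : Measurable h) (t : ℝ) (s : Finset (Fin B)) :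
    mgf (fun ω => ∑ i ∈ s, h (∑ j, X i j ω)) μ t
      = ∏ i ∈ s, mgf (fun ω => h (∑ j, X i j ω)) μ t := by
  classical
  induction s using Finset.induction_on with
  | empty => simp [mgf_const]
  | @insert a s ha ih =>
    have hind := rows_indep hmeas hInd h hh ha
    have hV : ∀ i : Fin B, AEStronglyMeasurable (fun ω => h (∑ j, X i j ω)) μ := fun i =>
      (hh.comp (Finset.measurable_sum _ fun j _ => hmeas i j)).aestronglyMeasurable
    have hsum : AEStronglyMeasurable (fun ω => ∑ i ∈ s, h (∑ j, X i j ω)) μ :=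
      (Finset.aestronglyMeasurable_fun_sum _ fun i _ => hV i)
    have hadd := hind.mgf_add' (t := t) (hV a) hsum
    rw [Finset.prod_insert ha, ← ih, ← hadd]
    congr 1
    funext ω
    simp [Finset.sum_insert ha]

end Aux

set_option maxHeartbeats 1600000 in
/-- For a `B × d₂` matrix `X` with i.i.d. entries uniform on `{-γ, γ}` and `d₂ ≥ 2`,
`P(|∑_{i,j,k} X_{ij} X_{ik} - γ² B d₂| ≥ γ² B d₂² / 8) ≤ 2 exp(-c B d₂)`. -/
theorem cross_term_XX_bound :
    ∃ c : ℝ, 0 < c ∧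
      ∀ (Ω : Type) (_ : MeasurableSpace Ω) (μ : Measure Ω), IsProbabilityMeasure μ →
        ∀ (B d₂ : ℕ), 0 < B → 2 ≤ d₂ →
          ∀ (γ : ℝ), 0 < γ →
            ∀ (X : Fin B → Fin d₂ → Ω → ℝ),
              (∀ i j, Measurable (X i j)) →
              iIndepFun
                (fun (p : Fin B × Fin d₂) ω => X p.1 p.2 ω) μ →
              (∀ i j, μ {ω | X i j ω = γ} = 1/2 ∧ μ {ω | X i j ω = -γ} = 1/2) →
              μ {ω | γ ^ 2 * B * (d₂ : ℝ) ^ 2 / 8 ≤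
                  |(∑ i : Fin B, ∑ j : Fin d₂, ∑ k : Fin d₂, X i j ω * X i k ω)
                    - γ ^ 2 * B * d₂|} ≤
                ENNReal.ofReal (2 * Real.exp (-(c * B * d₂))) := by
  classical
  refine ⟨1/20000, by norm_num, ?_⟩
  intro Ω mΩ μ hprob B d₂ hB hd₂ γ hγ X hmeas hInd hsign
  have hγ0 : γ ≠ 0 := hγ.ne'
  have hd0 : (d₂:ℝ) ≠ 0 := by positivity
  have hdpos : (0:ℝ) < d₂ := by positivity
  have hd2 : (2:ℝ) ≤ (d₂:ℝ) := by exact_mod_cast hd₂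
  have hB1 : (1:ℝ) ≤ (B:ℝ) := by exact_mod_cast hB
  have hB0 : (0:ℝ) ≤ (B:ℝ) := by positivity
  -- basic a.e. facts
  have hae : ∀ᵐ ω ∂μ, ∀ i j, X i j ω = γ ∨ X i j ω = -γ :=
    ae_all_iff.2 fun i => ae_all_iff.2 fun j =>
      two_point_ae (hmeas i j) hγ (hsign i j).1 (hsign i j).2
  have haeS : ∀ᵐ ω ∂μ, ∀ i, |∑ j, X i j ω| ≤ γ * d₂ := by
    filter_upwards [hae] with ω hω i
    calc |∑ j, X i j ω| ≤ ∑ j, |X i j ω| := Finset.abs_sum_le_sum_abs _ _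
    _ ≤ ∑ _j : Fin d₂, γ := by
        refine Finset.sum_le_sum fun j _ => ?_
        rcases hω i j with h | h <;> rw [h] <;>
          simp [abs_of_pos hγ]
    _ = γ * d₂ := by simp [Finset.sum_const, Finset.card_univ, mul_comm]
  have haeV : ∀ᵐ ω ∂μ, ∀ i, (∑ j, X i j ω)^2 ≤ γ^2 * (d₂:ℝ)^2 := by
    filter_upwards [haeS] with ω hω i
    calc (∑ j, X i j ω)^2 = |∑ j, X i j ω|^2 := (sq_abs _).symm
    _ ≤ (γ*d₂)^2 := by
        exact pow_le_pow_left₀ (abs_nonneg _) (hω i) 2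
    _ = γ^2*(d₂:ℝ)^2 := by ring
  have hSmeas : ∀ i, Measurable (fun ω => ∑ j, X i j ω) := fun i =>
    Finset.measurable_sum _ fun j _ => hmeas i j
  have hVmeas : ∀ i, Measurable (fun ω => (∑ j, X i j ω)^2) := fun i =>
    (hSmeas i).pow_const 2
  -- mgf of single entry
  have hmgfX : ∀ (i : Fin B) (j : Fin d₂) (t : ℝ), mgf (X i j) μ t = cosh (t * γ) := by
    intro i j t
    calc mgf (X i j) μ t = ∫ ω, exp (t * X i j ω) ∂μ := rfl
    _ = (exp (t*γ) + exp (t*(-γ)))/2 :=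
        two_point_integral_comp (hmeas i j) hγ (hsign i j).1 (hsign i j).2 (fun x => exp (t * x))
    _ = cosh (t*γ) := by rw [cosh_eq, mul_neg]
  -- mgf of a row sum
  have hmgfS : ∀ (i : Fin B) (t : ℝ), mgf (fun ω => ∑ j, X i j ω) μ t = cosh (t*γ) ^ d₂ := by
    intro i t
    have hms := hInd.mgf_sum (fun p => hmeas p.1 p.2) ({i} ×ˢ (univ : Finset (Fin d₂))) (t := t)
    have efun : (∑ p ∈ {i} ×ˢ (univ : Finset (Fin d₂)), (fun ω => X p.1 p.2 ω))
        = fun ω => ∑ j, X i j ω := by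
      funext ω
      rw [Finset.sum_apply, Finset.sum_product, Finset.sum_singleton]
    rw [efun] at hms
    rw [hms, Finset.prod_congr rfl (fun p _ => hmgfX p.1 p.2 t), Finset.prod_const]
    congr 1
    simp [Finset.card_product]
  -- integrability and expectation of row squares
  have hintV : ∀ i, Integrable (fun ω => (∑ j, X i j ω)^2) μ := by
    intro i
    refine Integrable.mono' (integrable_const (γ^2*(d₂:ℝ)^2)) (hVmeas i).aestronglyMeasurable ?_
    filter_upwards [haeV] with ω hω
    rw [Real.norm_eq_abs, abs_of_nonneg (sq_nonneg _)]
    exact hω i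
  have hEV : ∀ i, ∫ ω, (∑ j, X i j ω)^2 ∂μ = γ^2 * d₂ := by
    intro i
    have hre : ∀ ω, (∑ j, X i j ω)^2 = ∑ j, ∑ k, X i j ω * X i k ω := fun ω => by
      rw [sq, Finset.sum_mul_sum]
    have hintP : ∀ (j k : Fin d₂), Integrable (fun ω => X i j ω * X i k ω) μ := by
      intro j k
      refine Integrable.mono' (integrable_const (γ*γ))
        (((hmeas i j).mul (hmeas i k)).aestronglyMeasurable) ?_
      filter_upwards [hae] with ω hω
      rw [Real.norm_eq_abs, abs_mul]
      have h1 : |X i j ω| ≤ γ := by rcases hω i j with h|h <;> rw [h] <;> simp [abs_of_pos hγ]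
      have h2 : |X i k ω| ≤ γ := by rcases hω i k with h|h <;> rw [h] <;> simp [abs_of_pos hγ]
      exact mul_le_mul h1 h2 (abs_nonneg _) hγ.le
    have hz : ∀ (j : Fin d₂), ∫ ω, X i j ω ∂μ = 0 := by
      intro j
      have hid := two_point_integral_comp (hmeas i j) hγ (hsign i j).1 (hsign i j).2 id
      simp only [id] at hid
      rw [hid]
      ring
    calc ∫ ω, (∑ j, X i j ω)^2 ∂μ = ∫ ω, ∑ j, ∑ k, X i j ω * X i k ω ∂μ :=
        integral_congr_ae (Filter.Eventually.of_forall hre)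
    _ = ∑ j, ∑ k, ∫ ω, X i j ω * X i k ω ∂μ := by
        rw [integral_finset_sum _ (fun j _ => integrable_finset_sum _ (fun k _ => hintP j k))]
        exact Finset.sum_congr rfl fun j _ => integral_finset_sum _ (fun k _ => hintP j k)
    _ = ∑ j : Fin d₂, ∑ k : Fin d₂, (if j = k then γ^2 else 0) := by
        refine Finset.sum_congr rfl fun j _ => Finset.sum_congr rfl fun k _ => ?_
        by_cases hjk : j = k
        · subst hjk
          simp only [if_pos]
          have hsq := two_point_integral_comp (hmeas i j) hγ (hsign i j).1 (hsign i j).2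
            (fun x => x * x)
          calc ∫ ω, X i j ω * X i j ω ∂μ = (γ*γ + (-γ)*(-γ))/2 := hsq
          _ = γ^2 := by ring
        · simp only [if_neg hjk]
          have hne : ((i,j) : Fin B × Fin d₂) ≠ (i,k) := by simp [hjk]
          have hpair : IndepFun (X i j) (X i k) μ := hInd.indepFun hne
          have hmul := hpair.integral_fun_mul_eq_mul_integral (hmeas i j).aestronglyMeasurable
            (hmeas i k).aestronglyMeasurable
          calc ∫ ω, X i j ω * X i k ω ∂μ = (∫ ω, X i j ω ∂μ) * ∫ ω, X i k ω ∂μ := hmul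
          _ = 0 := by rw [hz j, hz k]; ring
    _ = γ^2 * d₂ := by
        simp only [Finset.sum_ite_eq, Finset.mem_univ, if_pos, Finset.sum_const,
          Finset.card_univ, Fintype.card_fin, nsmul_eq_mul]
        ring
  -- rewrite the triple sum
  have hF : ∀ ω, (∑ i : Fin B, ∑ j : Fin d₂, ∑ k : Fin d₂, X i j ω * X i k ω)
      = ∑ i : Fin B, (∑ j, X i j ω)^2 := by
    intro ω
    refine Finset.sum_congr rfl fun i _ => ?_
    rw [sq, Finset.sum_mul_sum]
  set T : ℝ := γ ^ 2 * B * (d₂ : ℝ) ^ 2 / 8 with hT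
  set m : ℝ := γ ^ 2 * B * d₂ with hm
  by_cases hdsmall : d₂ < 100
  · -- small d₂ : Hoeffding on the row squares
    have hd99 : (d₂:ℝ) ≤ 100 := by
      have : (d₂:ℝ) < 100 := by exact_mod_cast hdsmall
      linarith
    set A : ℝ := γ^2*(d₂:ℝ) with hA
    set M : ℝ := γ^2*(d₂:ℝ)^2 with hM
    have hMpos : 0 < M := by rw [hM]; positivity
    set h : ℝ → ℝ := fun x => x^2 - A with hh'
    have hh : Measurable h := (measurable_id.pow_const 2).sub measurable_const
    have haeRow : ∀ᵐ ω ∂μ, ∀ i, |h (∑ j, X i j ω)| ≤ M := by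
      filter_upwards [haeV] with ω hω i
      have h1 := hω i
      have h2 : (0:ℝ) ≤ (∑ j, X i j ω)^2 := sq_nonneg _
      have hAM : A ≤ M := by
        rw [hA, hM]
        nlinarith
      have hA0 : 0 ≤ A := by rw [hA]; positivity
      rw [abs_le]
      constructor
      · simp only [hh']; nlinarith
      · simp only [hh']; nlinarith
    have hrow : ∀ (i : Fin B) (t : ℝ),
        mgf (fun ω => h (∑ j, X i j ω)) μ t ≤ exp ((t*M)^2/2) := by
      intro i t
      refine hoeffding_lite (hh.comp (hSmeas i)) hMpos ?_ ?_ t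
      · filter_upwards [haeRow] with ω hω
        exact hω i
      · have : ∫ ω, ((∑ j, X i j ω)^2 - A) ∂μ = 0 := by
          rw [integral_sub (hintV i) (integrable_const A), hEV i, integral_const]
          simp [hA]
        exact this
    set Wm : Ω → ℝ := fun ω => ∑ i ∈ (univ : Finset (Fin B)), h (∑ j, X i j ω) with hWm'
    have hWmeas : Measurable Wm := Finset.measurable_sum _ fun i _ => hh.comp (hSmeas i)
    have haeWm : ∀ᵐ ω ∂μ, |Wm ω| ≤ B * M := by
      filter_upwards [haeRow] with ω hω
      calc |Wm ω| ≤ ∑ i : Fin B, |h (∑ j, X i j ω)| := Finset.abs_sum_le_sum_abs _ _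
      _ ≤ ∑ _i : Fin B, M := Finset.sum_le_sum fun i _ => hω i
      _ = B * M := by simp [Finset.sum_const, Finset.card_univ, mul_comm]
    have hmgfW : ∀ t : ℝ, mgf Wm μ t ≤ exp ((B:ℝ) * ((t*M)^2/2)) := by
      intro t
      calc mgf Wm μ t = ∏ i : Fin B, mgf (fun ω => h (∑ j, X i j ω)) μ t :=
          mgf_row_sum hmeas hInd h hh t univ
      _ ≤ ∏ _i : Fin B, exp ((t*M)^2/2) :=
          Finset.prod_le_prod (fun i _ => mgf_nonneg) (fun i _ => hrow i t)
      _ = exp ((B:ℝ) * ((t*M)^2/2)) := by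
          rw [Finset.prod_const, Finset.card_univ, Fintype.card_fin, ← Real.exp_nat_mul]
    set t₀ : ℝ := 1/(8*γ^2*(d₂:ℝ)^2) with ht₀
    have ht₀pos : 0 < t₀ := by rw [ht₀]; positivity
    have hup : (μ {ω | T ≤ Wm ω}).toReal ≤ exp (-(B:ℝ)/128) := by
      calc (μ {ω | T ≤ Wm ω}).toReal ≤ exp (-t₀ * T) * mgf Wm μ t₀ :=
          measure_ge_le_exp_mul_mgf T ht₀pos.le (integrable_exp_bounded hWmeas haeWm t₀)
      _ ≤ exp (-t₀ * T) * exp ((B:ℝ) * ((t₀*M)^2/2)) :=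
          mul_le_mul_of_nonneg_left (hmgfW t₀) (exp_pos _).le
      _ = exp (-t₀ * T + (B:ℝ) * ((t₀*M)^2/2)) := (exp_add _ _).symm
      _ = exp (-(B:ℝ)/128) := by
          congr 1
          rw [ht₀, hT, hM]
          field_simp
          ring
    have hlow : (μ {ω | Wm ω ≤ -T}).toReal ≤ exp (-(B:ℝ)/128) := by
      calc (μ {ω | Wm ω ≤ -T}).toReal ≤ exp (-(-t₀) * (-T)) * mgf Wm μ (-t₀) :=
          measure_le_le_exp_mul_mgf (-T) (by linarith : -t₀ ≤ 0)
            (integrable_exp_bounded hWmeas haeWm (-t₀))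
      _ ≤ exp (-(-t₀) * (-T)) * exp ((B:ℝ) * (((-t₀)*M)^2/2)) :=
          mul_le_mul_of_nonneg_left (hmgfW (-t₀)) (exp_pos _).le
      _ = exp (-(-t₀) * (-T) + (B:ℝ) * (((-t₀)*M)^2/2)) := (exp_add _ _).symm
      _ = exp (-(B:ℝ)/128) := by
          congr 1
          rw [ht₀, hT, hM]
          field_simp
          ring
    have hsub : {ω | T ≤ |(∑ i : Fin B, ∑ j : Fin d₂, ∑ k : Fin d₂, X i j ω * X i k ω) - m|}
        ⊆ {ω | T ≤ Wm ω} ∪ {ω | Wm ω ≤ -T} := by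
      intro ω hω
      simp only [Set.mem_setOf_eq] at hω
      have hWmEq : Wm ω = (∑ i : Fin B, ∑ j : Fin d₂, ∑ k : Fin d₂, X i j ω * X i k ω) - m := by
        rw [hWm']
        simp only
        rw [Finset.sum_sub_distrib, Finset.sum_const, Finset.card_univ, Fintype.card_fin,
          nsmul_eq_mul, hF ω, hm, hA]
        ring
      have habs : T ≤ |Wm ω| := by rw [hWmEq]; exact hω
      rcases le_abs.1 habs with hc | hc
      · exact Or.inl hc
      · exact Or.inr (by simp only [Set.mem_setOf_eq]; linarith)
    calc μ {ω | T ≤ |(∑ i : Fin B, ∑ j : Fin d₂, ∑ k : Fin d₂, X i j ω * X i k ω) - m|}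
        ≤ μ ({ω | T ≤ Wm ω} ∪ {ω | Wm ω ≤ -T}) := measure_mono hsub
    _ ≤ μ {ω | T ≤ Wm ω} + μ {ω | Wm ω ≤ -T} := measure_union_le _ _
    _ ≤ ENNReal.ofReal (exp (-(B:ℝ)/128)) + ENNReal.ofReal (exp (-(B:ℝ)/128)) :=
        add_le_add
          ((ENNReal.le_ofReal_iff_toReal_le (measure_ne_top _ _) (exp_pos _).le).2 hup)
          ((ENNReal.le_ofReal_iff_toReal_le (measure_ne_top _ _) (exp_pos _).le).2 hlow)
    _ = ENNReal.ofReal (2 * exp (-(B:ℝ)/128)) := by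
        rw [← ENNReal.ofReal_add (exp_pos _).le (exp_pos _).le]
        congr 1
        ring
    _ ≤ ENNReal.ofReal (2 * Real.exp (-(1/20000 * B * d₂))) := by
        apply ENNReal.ofReal_le_ofReal
        have hexp : (1:ℝ)/20000 * B * d₂ ≤ B/128 := by nlinarith
        have h2 : exp (-(B:ℝ)/128) ≤ exp (-(1/20000 * B * d₂)) := exp_le_exp.2 (by linarith)
        linarith
  · -- large d₂ : Chernoff with |S| bound
    push_neg at hdsmall
    have hd100 : (100:ℝ) ≤ (d₂:ℝ) := by exact_mod_cast hdsmall
    set t₀ : ℝ := 1/(8*γ^2*(d₂:ℝ)) with ht₀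
    have ht₀pos : 0 < t₀ := by rw [ht₀]; positivity
    set c' : ℝ := t₀ * (γ * d₂) with hc'
    have hc'γ : c' * γ = 1/8 := by
      rw [hc', ht₀]
      field_simp
    have hmgfV : ∀ i : Fin B, mgf (fun ω => (∑ j, X i j ω)^2) μ t₀ ≤ 2 * exp ((d₂:ℝ)/128) := by
      intro i
      have hkey : ∀ᵐ ω ∂μ, exp (t₀ * (∑ j, X i j ω)^2)
          ≤ exp (c' * (∑ j, X i j ω)) + exp (-c' * (∑ j, X i j ω)) := by
        filter_upwards [haeS] with ω hω
        set s := ∑ j, X i j ω with hs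
        have hs1 : |s| ≤ γ * d₂ := hω i
        have hstep : t₀ * s^2 ≤ c' * |s| := by
          have : s^2 ≤ (γ*d₂) * |s| := by
            rw [← sq_abs]
            nlinarith [abs_nonneg s]
          calc t₀ * s^2 ≤ t₀ * ((γ*d₂) * |s|) := mul_le_mul_of_nonneg_left this ht₀pos.le
          _ = c' * |s| := by rw [hc']; ring
        rcases abs_cases s with ⟨heq, _⟩ | ⟨heq, _⟩
        · calc exp (t₀ * s^2) ≤ exp (c' * |s|) := exp_le_exp.2 hstep
          _ = exp (c' * s) := by rw [heq]
          _ ≤ exp (c' * s) + exp (-c' * s) := le_add_of_nonneg_right (exp_pos _).le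
        · calc exp (t₀ * s^2) ≤ exp (c' * |s|) := exp_le_exp.2 hstep
          _ = exp (-c' * s) := by rw [heq]; ring_nf
          _ ≤ exp (c' * s) + exp (-c' * s) := le_add_of_nonneg_left (exp_pos _).le
      have hintL : Integrable (fun ω => exp (t₀ * (∑ j, X i j ω)^2)) μ := by
        have hbV : ∀ᵐ ω ∂μ, |(∑ j, X i j ω)^2| ≤ γ^2*(d₂:ℝ)^2 := by
          filter_upwards [haeV] with ω hω
          rw [abs_of_nonneg (sq_nonneg _)]
          exact hω i
        exact integrable_exp_bounded (hVmeas i) hbV t₀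
      have haeSb : ∀ᵐ ω ∂μ, |∑ j, X i j ω| ≤ γ * d₂ := by
        filter_upwards [haeS] with ω hω; exact hω i
      have hint1 : Integrable (fun ω => exp (c' * (∑ j, X i j ω))) μ :=
        integrable_exp_bounded (hSmeas i) haeSb c'
      have hint2 : Integrable (fun ω => exp (-c' * (∑ j, X i j ω))) μ :=
        integrable_exp_bounded (hSmeas i) haeSb (-c')
      calc mgf (fun ω => (∑ j, X i j ω)^2) μ t₀
          = ∫ ω, exp (t₀ * (∑ j, X i j ω)^2) ∂μ := rfl
      _ ≤ ∫ ω, (exp (c' * (∑ j, X i j ω)) + exp (-c' * (∑ j, X i j ω))) ∂μ :=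
          integral_mono_ae hintL (hint1.add hint2) hkey
      _ = (∫ ω, exp (c' * (∑ j, X i j ω)) ∂μ) + ∫ ω, exp (-c' * (∑ j, X i j ω)) ∂μ :=
          integral_add hint1 hint2
      _ = mgf (fun ω => ∑ j, X i j ω) μ c' + mgf (fun ω => ∑ j, X i j ω) μ (-c') := rfl
      _ = cosh (c' * γ) ^ d₂ + cosh (-c' * γ) ^ d₂ := by rw [hmgfS i c', hmgfS i (-c')]
      _ = 2 * cosh (c' * γ) ^ d₂ := by
          rw [show -c' * γ = -(c' * γ) by ring, cosh_neg]
          ring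
      _ ≤ 2 * exp ((d₂:ℝ)/128) := by
          rw [hc'γ]
          have h1 : cosh ((1:ℝ)/8) ≤ exp (1/128) := by
            have := cosh_le_exp_half_sq ((1:ℝ)/8)
            norm_num at this ⊢
            exact this
          have h2 : cosh ((1:ℝ)/8) ^ d₂ ≤ exp (1/128) ^ d₂ :=
            pow_le_pow_left₀ (cosh_pos _).le h1 d₂
          have h3 : exp ((1:ℝ)/128) ^ d₂ = exp ((d₂:ℝ)/128) := by
            rw [← Real.exp_nat_mul]
            congr 1
            ring
          rw [← h3]
          linarith
    have hmgfN : mgf (fun ω => ∑ i ∈ (univ : Finset (Fin B)), (∑ j, X i j ω)^2) μ t₀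
        ≤ (2 * exp ((d₂:ℝ)/128)) ^ B := by
      calc mgf (fun ω => ∑ i ∈ (univ : Finset (Fin B)), (∑ j, X i j ω)^2) μ t₀
          = ∏ i : Fin B, mgf (fun ω => (fun x : ℝ => x^2) (∑ j, X i j ω)) μ t₀ :=
          mgf_row_sum hmeas hInd (fun x => x^2) (measurable_id.pow_const 2) t₀ univ
      _ ≤ ∏ _i : Fin B, (2 * exp ((d₂:ℝ)/128)) :=
          Finset.prod_le_prod (fun i _ => mgf_nonneg) (fun i _ => hmgfV i)
      _ = (2 * exp ((d₂:ℝ)/128)) ^ B := by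
          rw [Finset.prod_const, Finset.card_univ, Fintype.card_fin]
    have hNmeas : Measurable (fun ω => ∑ i ∈ (univ : Finset (Fin B)), (∑ j, X i j ω)^2) :=
      Finset.measurable_sum _ fun i _ => hVmeas i
    have haeN : ∀ᵐ ω ∂μ, |∑ i ∈ (univ : Finset (Fin B)), (∑ j, X i j ω)^2| ≤ B * (γ^2*(d₂:ℝ)^2) := by
      filter_upwards [haeV] with ω hω
      rw [abs_of_nonneg (Finset.sum_nonneg fun i _ => sq_nonneg _)]
      calc (∑ i : Fin B, (∑ j, X i j ω)^2) ≤ ∑ _i : Fin B, γ^2*(d₂:ℝ)^2 :=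
          Finset.sum_le_sum fun i _ => hω i
      _ = B * (γ^2*(d₂:ℝ)^2) := by simp [Finset.sum_const, Finset.card_univ, mul_comm]
    have hup : (μ {ω | m + T ≤ ∑ i ∈ (univ : Finset (Fin B)), (∑ j, X i j ω)^2}).toReal
        ≤ exp (-(1/20000 * B * d₂)) := by
      have hpow : ((2:ℝ) * exp ((d₂:ℝ)/128)) ^ B = exp ((B:ℝ) * log 2 + (B:ℝ) * ((d₂:ℝ)/128)) := by
        have e2 : (2:ℝ)^B = exp ((B:ℝ) * log 2) := by
          rw [Real.exp_nat_mul, Real.exp_log]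
          norm_num
        rw [mul_pow, e2, ← Real.exp_nat_mul, ← Real.exp_add]
      calc (μ {ω | m + T ≤ ∑ i ∈ (univ : Finset (Fin B)), (∑ j, X i j ω)^2}).toReal
          ≤ exp (-t₀ * (m + T)) *
            mgf (fun ω => ∑ i ∈ (univ : Finset (Fin B)), (∑ j, X i j ω)^2) μ t₀ :=
          measure_ge_le_exp_mul_mgf (m + T) ht₀pos.le
            (integrable_exp_bounded hNmeas haeN t₀)
      _ ≤ exp (-t₀ * (m + T)) * (2 * exp ((d₂:ℝ)/128)) ^ B :=
          mul_le_mul_of_nonneg_left hmgfN (exp_pos _).le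
      _ = exp (-t₀ * (m + T) + ((B:ℝ) * log 2 + (B:ℝ) * ((d₂:ℝ)/128))) := by
          rw [hpow, ← Real.exp_add]
      _ ≤ exp (-(1/20000 * B * d₂)) := by
          apply exp_le_exp.2
          have hval : -t₀ * (m + T) = -((B:ℝ)/8) - (B:ℝ)*(d₂:ℝ)/64 := by
            rw [ht₀, hm, hT]
            field_simp
            ring
          rw [hval]
          nlinarith [Real.log_two_lt_d9, mul_le_mul_of_nonneg_left hd100 hB0]
    have hsub : {ω | T ≤ |(∑ i : Fin B, ∑ j : Fin d₂, ∑ k : Fin d₂, X i j ω * X i k ω) - m|}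
        ⊆ {ω | m + T ≤ ∑ i ∈ (univ : Finset (Fin B)), (∑ j, X i j ω)^2} := by
      intro ω hω
      simp only [Set.mem_setOf_eq] at hω ⊢
      rw [hF ω] at hω
      have hN0 : 0 ≤ ∑ i : Fin B, (∑ j, X i j ω)^2 :=
        Finset.sum_nonneg fun i _ => sq_nonneg _
      have hmT : m - T < 0 := by
        have hpos : 0 < γ^2 * (B:ℝ) * d₂ := by positivity
        have hprod := mul_le_mul_of_nonneg_left hd100 hpos.le
        rw [hm, hT]
        nlinarith [hpos, hprod]
      rcases le_abs.1 hω with hc | hc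
      · linarith
      · exfalso
        have : (∑ i : Fin B, (∑ j, X i j ω)^2) ≤ m - T := by linarith
        linarith
    calc μ {ω | T ≤ |(∑ i : Fin B, ∑ j : Fin d₂, ∑ k : Fin d₂, X i j ω * X i k ω) - m|}
        ≤ μ {ω | m + T ≤ ∑ i ∈ (univ : Finset (Fin B)), (∑ j, X i j ω)^2} := measure_mono hsub
    _ ≤ ENNReal.ofReal (exp (-(1/20000 * B * d₂))) :=
        (ENNReal.le_ofReal_iff_toReal_le (measure_ne_top _ _) (exp_pos _).le).2 hup
    _ ≤ ENNReal.ofReal (2 * Real.exp (-(1/20000 * B * d₂))) := by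
        apply ENNReal.ofReal_le_ofReal
        nlinarith [exp_pos (-(1/20000 * (B:ℝ) * d₂))]
end
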